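/- Let H be a real Hilbert space and Q : H × H → ℝ a continuous symmetric positive semidefinite bilinear form. Suppose (u_n) is a sequence in H that is Q-bounded (sup_n Q(u_n,u_n) < ∞) and bounded in norm. Then there is a subsequence whose Cesàro means form a Q-Cauchy sequence, i.e., Q(σ_n - σ_m, σ_n - σ_m) → 0 where σ_n are the Cesàro means of the subsequence. -/

import Mathlib

open Filter Finset


lemma bs_aux_harm : Tendsto (fun n : ℕ => ((n:ℝ)+1)⁻¹ * ∑ i ∈ Finset.range (n+1), ((i:ℝ)+1)⁻¹)
    atTop (nhds 0) := by
  have h0 : Tendsto (fun i : ℕ => ((i:ℝ)+1)⁻¹) atTop (nhds 0) := by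
    simpa [one_div] using tendsto_one_div_add_atTop_nhds_zero_nat (𝕜 := ℝ)
  have h2 := h0.cesaro.comp (tendsto_add_atTop_nat 1)
  refine Tendsto.congr (fun n => ?_) h2
  simp only [Function.comp_apply]
  push_cast
  ring

lemma bs_aux_cesaro2 (A : ℕ → ℕ → ℝ) (c D : ℝ) (hD : 0 ≤ D)
    (hbd : ∀ i j, |A i j - c| ≤ (if i = j then D else 0) + 2*((i:ℝ)+1)⁻¹ + 2*((j:ℝ)+1)⁻¹) :
    Tendsto (fun p : ℕ × ℕ => ((p.1:ℝ)+1)⁻¹ * ((p.2:ℝ)+1)⁻¹ *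
      ∑ i ∈ Finset.range (p.1+1), ∑ j ∈ Finset.range (p.2+1), A i j) atTop (nhds c) := by
  set Hn : ℕ → ℝ := fun n => ((n:ℝ)+1)⁻¹ * ∑ i ∈ Finset.range (n+1), ((i:ℝ)+1)⁻¹ with hHn
  set β : ℕ × ℕ → ℝ := fun p => D * ((p.2:ℝ)+1)⁻¹ + 2 * Hn p.1 + 2 * Hn p.2 with hβ
  have hinv : Tendsto (fun n : ℕ => ((n:ℝ)+1)⁻¹) atTop (nhds 0) := by
    simpa [one_div] using tendsto_one_div_add_atTop_nhds_zero_nat (𝕜 := ℝ)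
  have hβ0 : Tendsto β atTop (nhds 0) := by
    rw [← prod_atTop_atTop_eq]
    have h1 : Tendsto (fun p : ℕ × ℕ => D * ((p.2:ℝ)+1)⁻¹) (atTop ×ˢ atTop) (nhds (D * 0)) :=
      ((hinv.comp tendsto_snd).const_mul D)
    have h2 : Tendsto (fun p : ℕ × ℕ => 2 * Hn p.1) (atTop ×ˢ atTop) (nhds (2 * 0)) :=
      ((bs_aux_harm.comp tendsto_fst).const_mul 2)
    have h3 : Tendsto (fun p : ℕ × ℕ => 2 * Hn p.2) (atTop ×ˢ atTop) (nhds (2 * 0)) :=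
      ((bs_aux_harm.comp tendsto_snd).const_mul 2)
    have := (h1.add h2).add h3
    simpa using this
  have key : Tendsto (fun p : ℕ × ℕ => (((p.1:ℝ)+1)⁻¹ * ((p.2:ℝ)+1)⁻¹ *
      ∑ i ∈ Finset.range (p.1+1), ∑ j ∈ Finset.range (p.2+1), A i j) - c) atTop (nhds 0) := by
    refine squeeze_zero_norm (fun p => ?_) hβ0
    obtain ⟨n, m⟩ := p
    have hN : (0:ℝ) < (n:ℝ)+1 := by positivity
    have hM : (0:ℝ) < (m:ℝ)+1 := by positivity
    have hsplit : (((n:ℝ)+1)⁻¹ * ((m:ℝ)+1)⁻¹ *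
        ∑ i ∈ Finset.range (n+1), ∑ j ∈ Finset.range (m+1), A i j) - c
        = ((n:ℝ)+1)⁻¹ * ((m:ℝ)+1)⁻¹ *
          ∑ i ∈ Finset.range (n+1), ∑ j ∈ Finset.range (m+1), (A i j - c) := by
      have : ∑ i ∈ Finset.range (n+1), ∑ j ∈ Finset.range (m+1), (A i j - c)
          = (∑ i ∈ Finset.range (n+1), ∑ j ∈ Finset.range (m+1), A i j)
            - ((n:ℝ)+1) * (((m:ℝ)+1) * c) := by
        simp [Finset.sum_sub_distrib, Finset.sum_const, Finset.card_range, mul_comm]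
      rw [this]
      field_simp
    rw [hsplit]
    have habs : |∑ i ∈ Finset.range (n+1), ∑ j ∈ Finset.range (m+1), (A i j - c)|
        ≤ ((n:ℝ)+1) * D + ((m:ℝ)+1) * (2 * ∑ i ∈ Finset.range (n+1), ((i:ℝ)+1)⁻¹)
          + ((n:ℝ)+1) * (2 * ∑ j ∈ Finset.range (m+1), ((j:ℝ)+1)⁻¹) := by
      calc |∑ i ∈ Finset.range (n+1), ∑ j ∈ Finset.range (m+1), (A i j - c)|
          ≤ ∑ i ∈ Finset.range (n+1), |∑ j ∈ Finset.range (m+1), (A i j - c)| :=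
            Finset.abs_sum_le_sum_abs _ _
        _ ≤ ∑ i ∈ Finset.range (n+1), ∑ j ∈ Finset.range (m+1), |A i j - c| :=
            Finset.sum_le_sum fun i _ => Finset.abs_sum_le_sum_abs _ _
        _ ≤ ∑ i ∈ Finset.range (n+1),
              (D + ((m:ℝ)+1) * (2*((i:ℝ)+1)⁻¹) + 2 * ∑ j ∈ Finset.range (m+1), ((j:ℝ)+1)⁻¹) := by
            apply Finset.sum_le_sum
            intro i _
            calc ∑ j ∈ Finset.range (m+1), |A i j - c|
                ≤ ∑ j ∈ Finset.range (m+1),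
                    ((if i = j then D else 0) + 2*((i:ℝ)+1)⁻¹ + 2*((j:ℝ)+1)⁻¹) :=
                  Finset.sum_le_sum fun j _ => hbd i j
              _ = (∑ j ∈ Finset.range (m+1), (if i = j then D else 0))
                    + ((m:ℝ)+1) * (2*((i:ℝ)+1)⁻¹)
                    + 2 * ∑ j ∈ Finset.range (m+1), ((j:ℝ)+1)⁻¹ := by
                  simp [Finset.sum_add_distrib, Finset.sum_const, Finset.card_range,
                    Finset.mul_sum]
              _ ≤ D + ((m:ℝ)+1) * (2*((i:ℝ)+1)⁻¹)
                    + 2 * ∑ j ∈ Finset.range (m+1), ((j:ℝ)+1)⁻¹ := by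
                  have : (∑ j ∈ Finset.range (m+1), (if i = j then D else 0)) ≤ D := by
                    rw [Finset.sum_ite_eq]
                    split_ifs <;> simp [hD]
                  linarith
        _ = ((n:ℝ)+1) * D + ((m:ℝ)+1) * (2 * ∑ i ∈ Finset.range (n+1), ((i:ℝ)+1)⁻¹)
              + ((n:ℝ)+1) * (2 * ∑ j ∈ Finset.range (m+1), ((j:ℝ)+1)⁻¹) := by
            simp [Finset.sum_add_distrib, Finset.sum_const, Finset.card_range, Finset.mul_sum]
    have hβval : β (n, m) = D * ((m:ℝ)+1)⁻¹ + 2 * Hn n + 2 * Hn m := rfl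
    rw [Real.norm_eq_abs, abs_mul, abs_of_nonneg (by positivity :
      (0:ℝ) ≤ ((n:ℝ)+1)⁻¹ * ((m:ℝ)+1)⁻¹)]
    calc ((n:ℝ)+1)⁻¹ * ((m:ℝ)+1)⁻¹ * |∑ i ∈ Finset.range (n+1), ∑ j ∈ Finset.range (m+1), (A i j - c)|
        ≤ ((n:ℝ)+1)⁻¹ * ((m:ℝ)+1)⁻¹ *
          (((n:ℝ)+1) * D + ((m:ℝ)+1) * (2 * ∑ i ∈ Finset.range (n+1), ((i:ℝ)+1)⁻¹)
            + ((n:ℝ)+1) * (2 * ∑ j ∈ Finset.range (m+1), ((j:ℝ)+1)⁻¹)) := by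
          apply mul_le_mul_of_nonneg_left habs (by positivity)
      _ = β (n, m) := by
          rw [hβval, hHn]
          field_simp
  have := key.add_const c
  simpa using this

/-- Banach–Saks type theorem for energy forms: if `Q` is a continuous symmetric
positive semidefinite bilinear form on a real Hilbert space `H` and `(u_n)` is bounded in norm
and `Q`-bounded, then some subsequence has `Q`-Cauchy Cesàro means. -/
theorem stmt8 {H : Type*} [NormedAddCommGroup H] [InnerProductSpace ℝ H] [CompleteSpace H]
    (Q : H → H → ℝ)
    (hcont : Continuous fun p : H × H => Q p.1 p.2)
    (hadd₁ : ∀ x y z : H, Q (x + y) z = Q x z + Q y z)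
    (hsmul₁ : ∀ (c : ℝ) (x z : H), Q (c • x) z = c * Q x z)
    (hsym : ∀ x y : H, Q x y = Q y x)
    (hpos : ∀ x : H, 0 ≤ Q x x)
    (u : ℕ → H) (CQ Cn : ℝ)
    (hQbdd : ∀ n, Q (u n) (u n) ≤ CQ)
    (hnbdd : ∀ n, ‖u n‖ ≤ Cn) :
    ∃ φ : ℕ → ℕ, StrictMono φ ∧
      Tendsto
        (fun p : ℕ × ℕ =>
          Q ((p.1 + 1 : ℝ)⁻¹ • ∑ i ∈ Finset.range (p.1 + 1), u (φ i) -
              (p.2 + 1 : ℝ)⁻¹ • ∑ i ∈ Finset.range (p.2 + 1), u (φ i))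
            ((p.1 + 1 : ℝ)⁻¹ • ∑ i ∈ Finset.range (p.1 + 1), u (φ i) -
              (p.2 + 1 : ℝ)⁻¹ • ∑ i ∈ Finset.range (p.2 + 1), u (φ i)))
        atTop (nhds 0) := by
  -- basic bilinearity facts
  have hadd₂ : ∀ x y z : H, Q z (x + y) = Q z x + Q z y := fun x y z => by
    rw [hsym, hadd₁, hsym x z, hsym y z]
  have hsmul₂ : ∀ (c : ℝ) (x z : H), Q z (c • x) = c * Q z x := fun c x z => by
    rw [hsym, hsmul₁, hsym]
  have hQ0 : ∀ z : H, Q 0 z = 0 := fun z => by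
    have := hsmul₁ 0 0 z; simpa using this
  have hsum₁ : ∀ (s : Finset ℕ) (v : ℕ → H) (z : H),
      Q (∑ i ∈ s, v i) z = ∑ i ∈ s, Q (v i) z := by
    intro s v z
    induction s using Finset.cons_induction with
    | empty => simpa using hQ0 z
    | cons a s ha ih => rw [Finset.sum_cons, hadd₁, ih, Finset.sum_cons]
  have hsum₂ : ∀ (s : Finset ℕ) (v : ℕ → H) (z : H),
      Q z (∑ i ∈ s, v i) = ∑ i ∈ s, Q z (v i) := by
    intro s v z
    rw [hsym, hsum₁]
    exact Finset.sum_congr rfl fun i _ => hsym _ _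
  -- Cauchy–Schwarz
  have hCS : ∀ x y : H, Q x y * Q x y ≤ Q x x * Q y y := by
    intro x y
    have hq : ∀ t : ℝ, 0 ≤ Q y y * (t * t) + 2 * Q x y * t + Q x x := by
      intro t
      have h := hpos (x + t • y)
      have hexp : Q (x + t • y) (x + t • y)
          = Q y y * (t * t) + 2 * Q x y * t + Q x x := by
        simp only [hadd₁, hadd₂, hsmul₁, hsmul₂]
        rw [hsym y x]
        ring
      linarith [hexp ▸ h]
    have hd := discrim_le_zero hq
    rw [discrim] at hd
    nlinarith [hd]
  have hCQ0 : (0:ℝ) ≤ CQ := le_trans (hpos (u 0)) (hQbdd 0)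
  have hbddij : ∀ i j, |Q (u i) (u j)| ≤ CQ := by
    intro i j
    have h1 := hCS (u i) (u j)
    have h2 := hpos (u i); have h3 := hpos (u j)
    have h4 := hQbdd i; have h5 := hQbdd j
    rw [abs_le]
    constructor <;> nlinarith
  -- Step 1: diagonal extraction via compactness of the product of intervals
  have hKc : IsCompact (Set.pi Set.univ fun _ : ℕ => Set.Icc (-CQ) CQ) :=
    isCompact_univ_pi fun _ => isCompact_Icc
  have hxK : ∀ n, (fun i => Q (u i) (u n)) ∈ Set.pi Set.univ fun _ : ℕ => Set.Icc (-CQ) CQ := by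
    intro n i _
    have := hbddij i n
    rw [abs_le] at this
    exact ⟨this.1, this.2⟩
  obtain ⟨f, hfK, φ₁, hφ₁, hf⟩ := hKc.tendsto_subseq hxK
  rw [tendsto_pi_nhds] at hf
  have hf' : ∀ i, Tendsto (fun j => Q (u i) (u (φ₁ j))) atTop (nhds (f i)) := by
    intro i
    exact hf i
  -- Step 2: Bolzano–Weierstrass for the limits along the subsequence
  have hgK : ∀ n, f (φ₁ n) ∈ Set.Icc (-CQ) CQ := fun n => hfK (φ₁ n) trivial
  obtain ⟨c, -, θ, hθ, hgc⟩ := (isCompact_Icc (a := -CQ) (b := CQ)).tendsto_subseq hgK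
  -- Step 3: build the final extraction
  have hRex : ∀ m : ℕ, ∃ N : ℕ, ∀ j ≥ N,
      |Q (u (φ₁ (θ m))) (u (φ₁ (θ j))) - f (φ₁ (θ m))| ≤ ((m:ℝ)+1)⁻¹ := by
    intro m
    have h1 : Tendsto (fun j => Q (u (φ₁ (θ m))) (u (φ₁ (θ j)))) atTop
        (nhds (f (φ₁ (θ m)))) := (hf' (φ₁ (θ m))).comp hθ.tendsto_atTop
    have hp : (0:ℝ) < ((m:ℝ)+1)⁻¹ := by positivity
    obtain ⟨N, hN⟩ := Metric.tendsto_atTop.mp h1 _ hp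
    exact ⟨N, fun j hj => by have := hN j hj; rw [Real.dist_eq] at this; exact this.le⟩
  have hSex : ∀ k : ℕ, ∃ N : ℕ, ∀ n ≥ N, |f (φ₁ (θ n)) - c| ≤ ((k:ℝ)+1)⁻¹ := by
    intro k
    have hp : (0:ℝ) < ((k:ℝ)+1)⁻¹ := by positivity
    obtain ⟨N, hN⟩ := Metric.tendsto_atTop.mp hgc _ hp
    refine ⟨N, fun n hn => ?_⟩
    have := hN n hn
    rw [Function.comp_apply, Real.dist_eq] at this
    exact this.le
  choose R hR using hRex
  choose S hS using hSex
  obtain ⟨τ, hτ0, hτsucc⟩ : ∃ τ : ℕ → ℕ, τ 0 = S 0 ∧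
      ∀ k, τ (k+1) = max (τ k + 1) (max (S (k+1)) ((Finset.range (τ k + 1)).sup R)) :=
    ⟨fun k => Nat.rec (S 0)
      (fun k ih => max (ih + 1) (max (S (k+1)) ((Finset.range (ih+1)).sup R))) k,
      rfl, fun k => rfl⟩
  have hτmono : StrictMono τ := strictMono_nat_of_lt_succ fun k => by
    rw [hτsucc]
    exact lt_of_lt_of_le (Nat.lt_succ_self _) (le_max_left _ _)
  have hτS : ∀ k, S k ≤ τ k := by
    intro k
    cases k with
    | zero => exact le_of_eq hτ0.symm
    | succ k =>
      rw [hτsucc]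
      exact le_trans (le_max_left _ _) (le_max_right _ _)
  have hτR : ∀ i j, i < j → R (τ i) ≤ τ j := by
    intro i j hij
    have h1 : R (τ i) ≤ τ (i+1) := by
      rw [hτsucc]
      exact le_trans (Finset.le_sup (Finset.self_mem_range_succ (τ i)))
        (le_trans (le_max_right _ _) (le_max_right _ _))
    exact le_trans h1 (hτmono.monotone (Nat.succ_le_of_lt hij))
  -- the final subsequence
  refine ⟨fun k => φ₁ (θ (τ k)), (hφ₁.comp hθ).comp hτmono, ?_⟩
  set v : ℕ → H := fun k => u (φ₁ (θ (τ k))) with hv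
  set A : ℕ → ℕ → ℝ := fun i j => Q (v i) (v j) with hA
  have hτge : ∀ i : ℕ, (i:ℝ) + 1 ≤ ((τ i : ℕ) : ℝ) + 1 := by
    intro i
    have := hτmono.le_apply (x := i)
    exact_mod_cast Nat.succ_le_succ this
  have hoffA : ∀ i j, i < j → |A i j - c| ≤ 2 * ((i:ℝ)+1)⁻¹ := by
    intro i j hij
    have h1 := hR (τ i) (τ j) (hτR i j hij)
    have h2 := hS i (τ i) (hτS i)
    have h3 : ((τ i : ℝ)+1)⁻¹ ≤ ((i:ℝ)+1)⁻¹ :=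
      inv_anti₀ (by positivity) (hτge i)
    have htri := abs_sub_le (A i j) (f (φ₁ (θ (τ i)))) c
    have : |A i j - f (φ₁ (θ (τ i)))| ≤ ((τ i:ℝ)+1)⁻¹ := h1
    linarith
  have hdiagA : ∀ i, |A i i - c| ≤ CQ + |c| := by
    intro i
    have h1 : |A i i| ≤ CQ := hbddij _ _
    have := abs_sub (A i i) c
    calc |A i i - c| ≤ |A i i| + |c| := abs_sub _ _
      _ ≤ CQ + |c| := by linarith
  set D : ℝ := CQ + |c| with hD
  have hD0 : (0:ℝ) ≤ D := by positivity
  have hbd : ∀ i j, |A i j - c| ≤ (if i = j then D else 0)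
      + 2*((i:ℝ)+1)⁻¹ + 2*((j:ℝ)+1)⁻¹ := by
    intro i j
    rcases lt_trichotomy i j with h | h | h
    · have := hoffA i j h
      have h0 : (0:ℝ) ≤ 2*((j:ℝ)+1)⁻¹ := by positivity
      rw [if_neg h.ne]
      linarith
    · subst h
      rw [if_pos rfl]
      have h0 : (0:ℝ) ≤ 2*((i:ℝ)+1)⁻¹ := by positivity
      have := hdiagA i
      linarith
    · have h1 := hoffA j i h
      have h2 : A i j = A j i := hsym _ _
      have h0 : (0:ℝ) ≤ 2*((i:ℝ)+1)⁻¹ := by positivity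
      rw [if_neg h.ne', h2]
      linarith
  have hB := bs_aux_cesaro2 A c D hD0 hbd
  -- assemble
  have hmap1 : Tendsto (fun p : ℕ × ℕ => ((p.1, p.1) : ℕ × ℕ)) atTop atTop := by
    rw [← prod_atTop_atTop_eq]
    exact tendsto_fst.prodMk tendsto_fst
  have hmap2 : Tendsto (fun p : ℕ × ℕ => ((p.2, p.2) : ℕ × ℕ)) atTop atTop := by
    rw [← prod_atTop_atTop_eq]
    exact tendsto_snd.prodMk tendsto_snd
  have h11 := hB.comp hmap1
  have h22 := hB.comp hmap2
  have hfinal := (h11.sub (hB.const_mul 2)).add h22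
  have hzero : c - 2 * c + c = 0 := by ring
  rw [show c - 2 * c + c = 0 from hzero] at hfinal
  refine Tendsto.congr (fun p => ?_) hfinal
  obtain ⟨n, m⟩ := p
  simp only [Function.comp_apply]
  -- now pure algebra
  have hBQ : ∀ a b : ℕ,
      Q (((a:ℝ)+1)⁻¹ • ∑ i ∈ Finset.range (a+1), v i) (((b:ℝ)+1)⁻¹ • ∑ i ∈ Finset.range (b+1), v i)
      = ((a:ℝ)+1)⁻¹ * ((b:ℝ)+1)⁻¹ * ∑ i ∈ Finset.range (a+1), ∑ j ∈ Finset.range (b+1), A i j := by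
    intro a b
    rw [hsmul₁, hsmul₂, hsum₁]
    rw [Finset.sum_congr rfl fun i _ => hsum₂ (Finset.range (b+1)) v (v i)]
    ring
  have hQsub : ∀ x y : H, Q (x - y) (x - y) = Q x x - 2 * Q x y + Q y y := by
    intro x y
    have h : x - y = x + (-1 : ℝ) • y := by
      rw [neg_one_smul, sub_eq_add_neg]
    rw [h]
    simp only [hadd₁, hadd₂, hsmul₁, hsmul₂]
    rw [hsym y x]
    ring
  rw [hQsub, hBQ, hBQ, hBQ]
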